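/- Let E be a real Hilbert space with topological dual E*, let Λ₁, Λ₂, 𝒥 : E → E* be bounded linear maps, and let s, t ∈ ℝ. Define the subspaces μ = {(f, Λ₁f, g, −Λ₂g) : f, g ∈ E} and β(s,t) = {(x, t·φ + s·𝒥x, t·x, φ) : x ∈ E, φ ∈ E*} of E × E* × E × E*. Then the map x ↦ (x, Λ₁x, t·x, −t·(Λ₂x)) is a linear isomorphism from ker(Λ₁ + t²·Λ₂ − s·𝒥) onto β(s,t) ∩ μ. In particular, β(s,t) ∩ μ is nontrivial if and only if ker(Λ₁ + t²·Λ₂ − s·𝒥) is nontrivial, and the two spaces have equal dimension. -/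

import Mathlib

noncomputable section

/-- The subspace `μ = {(f, Λ₁f, g, −Λ₂g) : f, g ∈ E}` of `E × E* × E × E*`. -/
def muSub {E : Type*} [NormedAddCommGroup E] [InnerProductSpace ℝ E]
    (Λ₁ Λ₂ : E →L[ℝ] StrongDual ℝ E) :
    Submodule ℝ (E × StrongDual ℝ E × E × StrongDual ℝ E) where
  carrier := {z | ∃ f g : E, z = (f, Λ₁ f, g, -(Λ₂ g))}
  add_mem' := by
    rintro _ _ ⟨f, g, rfl⟩ ⟨f', g', rfl⟩
    exact ⟨f + f', g + g', by simp [Prod.ext_iff]; abel⟩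
  zero_mem' := ⟨0, 0, by simp; rfl⟩
  smul_mem' := by
    rintro c _ ⟨f, g, rfl⟩
    exact ⟨c • f, c • g, by simp [Prod.ext_iff, Prod.smul_def]⟩

/-- The subspace `β(s,t) = {(x, t·φ + s·𝒥x, t·x, φ) : x ∈ E, φ ∈ E*}` of `E × E* × E × E*`. -/
def betaSub {E : Type*} [NormedAddCommGroup E] [InnerProductSpace ℝ E]
    (J : E →L[ℝ] StrongDual ℝ E) (s t : ℝ) :
    Submodule ℝ (E × StrongDual ℝ E × E × StrongDual ℝ E) where
  carrier := {z | ∃ (x : E) (φ : StrongDual ℝ E), z = (x, t • φ + s • J x, t • x, φ)}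
  add_mem' := by
    rintro _ _ ⟨x, φ, rfl⟩ ⟨x', φ', rfl⟩
    exact ⟨x + x', φ + φ', by simp [Prod.ext_iff, smul_add]; abel⟩
  zero_mem' := ⟨0, 0, by simp; rfl⟩
  smul_mem' := by
    rintro c _ ⟨x, φ, rfl⟩
    refine ⟨c • x, c • φ, ?_⟩
    simp [Prod.ext_iff, Prod.smul_def, smul_add, smul_comm c]

set_option maxHeartbeats 1000000 in
/-- The map `x ↦ (x, Λ₁x, t·x, −t·Λ₂x)` is a linear isomorphism from
`ker(Λ₁ + t²Λ₂ − s𝒥)` onto `β(s,t) ∩ μ`; in particular the intersection is nontrivial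
iff the kernel is, and the two spaces have equal dimension. -/
theorem stmt9 {E : Type*} [NormedAddCommGroup E] [InnerProductSpace ℝ E] [CompleteSpace E]
    (Λ₁ Λ₂ J : E →L[ℝ] StrongDual ℝ E) (s t : ℝ) :
    (∃ e : LinearMap.ker (Λ₁ + t ^ 2 • Λ₂ - s • J).toLinearMap ≃ₗ[ℝ] ↥(betaSub J s t ⊓ muSub Λ₁ Λ₂),
      ∀ x : LinearMap.ker (Λ₁ + t ^ 2 • Λ₂ - s • J).toLinearMap,
        (e x : E × StrongDual ℝ E × E × StrongDual ℝ E)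
          = ((x : E), Λ₁ (x : E), t • (x : E), -(t • Λ₂ (x : E)))) ∧
    (betaSub J s t ⊓ muSub Λ₁ Λ₂ ≠ ⊥ ↔ LinearMap.ker (Λ₁ + t ^ 2 • Λ₂ - s • J).toLinearMap ≠ ⊥) ∧
    Module.rank ℝ (LinearMap.ker (Λ₁ + t ^ 2 • Λ₂ - s • J).toLinearMap)
      = Module.rank ℝ ↥(betaSub J s t ⊓ muSub Λ₁ Λ₂) := by
  set K := LinearMap.ker (Λ₁ + t ^ 2 • Λ₂ - s • J).toLinearMap with hK
  have hker : ∀ x : E, x ∈ K ↔ Λ₁ x + t ^ 2 • Λ₂ x - s • J x = 0 := by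
    intro x; simp [hK, LinearMap.mem_ker]
  have hmem : ∀ x : E, x ∈ K →
      ((x, Λ₁ x, t • x, -(t • Λ₂ x)) :
        E × StrongDual ℝ E × E × StrongDual ℝ E) ∈
        betaSub J s t ⊓ muSub Λ₁ Λ₂ := by
    intro x hx
    rw [hker] at hx
    constructor
    · refine ⟨x, -(t • Λ₂ x), ?_⟩
      have h1 : Λ₁ x = t • -(t • Λ₂ x) + s • J x := by
        rw [smul_neg, smul_smul, ← sq]
        linear_combination (norm := module) hx
      rw [h1]
    · exact ⟨x, t • x, by rw [map_smul]⟩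
  let F : K →ₗ[ℝ] ↥(betaSub J s t ⊓ muSub Λ₁ Λ₂) :=
    { toFun := fun x => ⟨((x : E), Λ₁ x, t • (x : E), -(t • Λ₂ x)), hmem x x.2⟩
      map_add' := fun x y => Subtype.ext (by
        simp only [Submodule.coe_add, Prod.mk_add_mk, map_add, smul_add, neg_add])
      map_smul' := fun c x => Subtype.ext (by
        simp only [Submodule.coe_smul, Prod.smul_mk, map_smul, smul_neg, RingHom.id_apply,
          smul_comm c t]) }
  have hF1 : ∀ x : K, ((F x : E × StrongDual ℝ E × E × StrongDual ℝ E)).1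
      = (x : E) := fun x => rfl
  have hinj : Function.Injective F := by
    intro x y hxy
    exact Subtype.ext (by rw [← hF1 x, ← hF1 y, hxy])
  have hsurj : Function.Surjective F := by
    rintro ⟨z, ⟨x, φ, rfl⟩, f, g, hz⟩
    simp only [Prod.ext_iff] at hz
    obtain ⟨h1, h2, h3, h4⟩ := hz
    subst h1
    rw [← h3] at h4
    rw [h4, map_smul, smul_neg, smul_smul, ← sq] at h2
    have hxK : x ∈ K := by
      rw [hker]
      linear_combination (norm := module) -h2
    refine ⟨⟨x, hxK⟩, Subtype.ext ?_⟩
    show ((x, Λ₁ x, t • x, -(t • Λ₂ x)) :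
      E × StrongDual ℝ E × E × StrongDual ℝ E) = (x, t • φ + s • J x, t • x, φ)
    refine Prod.ext rfl (Prod.ext ?_ (Prod.ext rfl ?_))
    · rw [h4, map_smul, smul_neg, smul_smul, ← sq]
      exact h2.symm
    · rw [h4, map_smul]
  let e : K ≃ₗ[ℝ] ↥(betaSub J s t ⊓ muSub Λ₁ Λ₂) := LinearEquiv.ofBijective F ⟨hinj, hsurj⟩
  have he : ∀ x : K, (e x : E × StrongDual ℝ E × E × StrongDual ℝ E)
      = ((x : E), Λ₁ (x : E), t • (x : E), -(t • Λ₂ (x : E))) := fun x => rfl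
  refine ⟨⟨e, he⟩, ?_, e.rank_eq⟩
  rw [Submodule.ne_bot_iff, Submodule.ne_bot_iff]
  constructor
  · rintro ⟨z, hz, hz0⟩
    obtain ⟨x, hx⟩ := hsurj ⟨z, hz⟩
    refine ⟨x, x.2, ?_⟩
    intro h0
    apply hz0
    have hx0 : x = 0 := Subtype.ext h0
    rw [hx0, map_zero] at hx
    exact (congrArg Subtype.val hx).symm
  · rintro ⟨x, hx, hx0⟩
    refine ⟨(F ⟨x, hx⟩ : E × StrongDual ℝ E × E × StrongDual ℝ E),
      (F ⟨x, hx⟩).2, ?_⟩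
    intro h0
    exact hx0 (by simpa [hF1] using congrArg Prod.fst h0)
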